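/- Let Σ be a signed graph with n vertices and let μ ∉ {0,1,−1} be an eigenvalue of Σ with multiplicity k. Then n ≤ C(t+2, 3) where t = n − k. -/

import Mathlib

open Matrix

private lemma cube_mem_aux {x : ℝ} (h : x ∈ ({0, 1, -1} : Set ℝ)) : x * x * x = x := by
  rcases h with h | h | h <;> rw [h] <;> norm_num

/-- Key combinatorial linear-independence lemma: if `M` is symmetric with off-diagonal
entries `x` satisfying `x³ = x`, diagonal `-μ` with `μ ∉ {0,±1}`, and the symmetric cubes
of the columns of `M` satisfy a linear relation `g`, then `g = 0`. -/
private lemma indep_aux {n : ℕ} (M : Matrix (Fin n) (Fin n) ℝ) (μ : ℝ)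
    (hsymm : ∀ p q, M p q = M q p)
    (hoff : ∀ q p, q ≠ p → M q p * M q p * M q p = M q p)
    (hdiag : ∀ p, M p p = -μ)
    (hμ3 : μ ^ 3 - μ ≠ 0) (hμ0 : μ ≠ 0)
    (g : Fin n → ℝ)
    (hrel : ∀ q r s, ∑ p, g p * (M q p * M r p * M s p) = 0) :
    ∀ p, g p = 0 := by
  have h1 : ∀ q, ∑ p, M q p * g p = (μ ^ 3 - μ) * g q := by
    intro q
    have e : ∀ p ∈ Finset.univ, g p * (M q p * M q p * M q p)
        = M q p * g p + (if p = q then (μ - μ ^ 3) * g q else 0) := by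
      intro p _
      by_cases h : p = q
      · subst h
        rw [hdiag, if_pos rfl]
        ring
      · rw [hoff q p (Ne.symm h), if_neg h]
        ring
    have h0 := hrel q q q
    rw [Finset.sum_congr rfl e, Finset.sum_add_distrib,
      Finset.sum_ite_eq' Finset.univ q] at h0
    simp only [Finset.mem_univ, if_true] at h0
    linarith [h0]
  have h2 : ∀ q s, ∑ p, M s p * (g p * (M q p * M q p)) = 0 := by
    intro q s
    have h0 := hrel q q s
    rw [← h0]
    apply Finset.sum_congr rfl
    intro p _
    ring
  intro q
  have h3 : (μ ^ 3 - μ) * ∑ p, (g p * M q p) ^ 2 = 0 := by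
    calc (μ ^ 3 - μ) * ∑ p, (g p * M q p) ^ 2
        = ∑ p, ((μ ^ 3 - μ) * g p) * (g p * (M q p * M q p)) := by
          rw [Finset.mul_sum]
          apply Finset.sum_congr rfl
          intro p _
          ring
      _ = ∑ p, (∑ s, M p s * g s) * (g p * (M q p * M q p)) := by
          apply Finset.sum_congr rfl
          intro p _
          rw [h1 p]
      _ = ∑ p, ∑ s, M p s * g s * (g p * (M q p * M q p)) := by
          apply Finset.sum_congr rfl
          intro p _
          rw [Finset.sum_mul]
      _ = ∑ s, ∑ p, M p s * g s * (g p * (M q p * M q p)) := Finset.sum_comm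
      _ = ∑ s, g s * ∑ p, M s p * (g p * (M q p * M q p)) := by
          apply Finset.sum_congr rfl
          intro s _
          rw [Finset.mul_sum]
          apply Finset.sum_congr rfl
          intro p _
          rw [hsymm p s]
          ring
      _ = 0 := by
          apply Finset.sum_eq_zero
          intro s _
          rw [h2 q s, mul_zero]
  have h4 : ∑ p, (g p * M q p) ^ 2 = 0 := by
    rcases mul_eq_zero.mp h3 with h | h
    · exact absurd h hμ3
    · exact h
  have h5 := (Finset.sum_eq_zero_iff_of_nonneg (fun p _ => sq_nonneg (g p * M q p))).mp h4
    q (Finset.mem_univ q)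
  rw [hdiag q] at h5
  have h6 : g q * -μ = 0 := by
    exact pow_eq_zero_iff (two_ne_zero) |>.mp h5
  rcases mul_eq_zero.mp h6 with h | h
  · exact h
  · exact absurd (neg_eq_zero.mp h) hμ0

theorem cubic_bound_on_order {n : ℕ}
    (A : Matrix (Fin n) (Fin n) ℝ)
    (hsymm : A.IsSymm)
    (hentries : ∀ p q, A p q ∈ ({0, 1, -1} : Set ℝ))
    (hdiag : ∀ p, A p p = 0)
    (μ : ℝ) (hμ : μ ∉ ({0, 1, -1} : Set ℝ))
    (heig : Module.End.HasEigenvalue (Matrix.toLin' A) μ)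
    (k : ℕ) (hk : k = Module.finrank ℝ (Module.End.eigenspace (Matrix.toLin' A) μ))
    (t : ℕ) (ht : t = n - k) :
    n ≤ (t + 2).choose 3 := by
  classical
  have hμ' := hμ
  simp only [Set.mem_insert_iff, Set.mem_singleton_iff, not_or] at hμ'
  obtain ⟨hμ0, hμ1, hμm1⟩ := hμ'
  have hμ3 : μ ^ 3 - μ ≠ 0 := by
    intro h
    have h' : μ * (μ - 1) * (μ + 1) = 0 := by nlinarith [h]
    rcases mul_eq_zero.mp h' with h'' | h''
    · rcases mul_eq_zero.mp h'' with h3 | h3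
      · exact hμ0 h3
      · exact hμ1 (by linarith)
    · exact hμm1 (by linarith)
  set M : Matrix (Fin n) (Fin n) ℝ := A - μ • (1 : Matrix (Fin n) (Fin n) ℝ) with hMdef
  have hMoff : ∀ p q : Fin n, p ≠ q → M p q = A p q := by
    intro p q h
    simp [hMdef, Matrix.sub_apply, Matrix.smul_apply, Matrix.one_apply_ne h]
  have hMdiag : ∀ p, M p p = -μ := by
    intro p
    simp [hMdef, Matrix.sub_apply, hdiag p]
  have hMsymm : ∀ p q, M p q = M q p := by
    intro p q
    by_cases h : p = q
    · rw [h]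
    · rw [hMoff p q h, hMoff q p (Ne.symm h)]
      exact hsymm.apply q p
  -- the kernel of M equals the eigenspace
  have hlin : Matrix.toLin' M = Matrix.toLin' A - μ • (1 : Module.End ℝ (Fin n → ℝ)) := by
    rw [hMdef, map_sub]
    congr 1
    rw [_root_.map_smul, Matrix.toLin'_one]
    rfl
  have hker : LinearMap.ker (Matrix.toLin' M) = Module.End.eigenspace (Matrix.toLin' A) μ := by
    rw [Module.End.eigenspace_def, hlin]
  set V := LinearMap.range (Matrix.toLin' M) with hV
  have hrank : Module.finrank ℝ V = t := by
    have h := LinearMap.finrank_range_add_finrank_ker (Matrix.toLin' M)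
    rw [hker, ← hk, Module.finrank_fin_fun, ← hV] at h
    omega
  -- the columns of M lie in V
  have hcV : ∀ p : Fin n, (fun q => M q p) ∈ V := by
    intro p
    refine ⟨Pi.single p 1, ?_⟩
    rw [Matrix.toLin'_apply]
    funext q
    simp [Matrix.mulVec, dotProduct, Pi.single_apply]
  have : FiniteDimensional ℝ V := inferInstance
  let B : Module.Basis (Fin t) ℝ V := Module.finBasisOfFinrankEq ℝ V hrank
  let b : Fin t → (Fin n → ℝ) := fun i => (B i : Fin n → ℝ)
  have hbspan : ∀ p : Fin n, (fun q => M q p) ∈ Submodule.span ℝ (Set.range b) := by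
    intro p
    have h1 : Set.range b = ⇑V.subtype '' Set.range ⇑B := by
      ext x
      simp [b, Submodule.coe_subtype]
    rw [h1, Submodule.span_image, B.span_eq, Submodule.map_top, Submodule.range_subtype]
    exact hcV p
  choose d hd using fun p => (Submodule.mem_span_range_iff_exists_fun ℝ).mp (hbspan p)
  have hcd : ∀ p q, M q p = ∑ i, d p i * b i q := by
    intro p q
    calc M q p = (∑ i, d p i • b i) q := (congrFun (hd p) q).symm
      _ = ∑ i, d p i * b i q := by simp [Finset.sum_apply]
  -- monomial functions indexed by multisets of size 3
  let mono : Sym (Fin t) 3 → ((Fin t → ℝ) → ℝ) :=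
    fun m y => (Multiset.map y (m : Multiset (Fin t))).prod
  let W := Submodule.span ℝ (Set.range mono)
  have hmono3 : ∀ i j l : Fin t, (fun y : Fin t → ℝ => y i * y j * y l) ∈ Set.range mono := by
    intro i j l
    refine ⟨⟨{i, j, l}, by simp⟩, ?_⟩
    funext y
    simp [mono]
    ring
  let Q : Fin n → ((Fin t → ℝ) → ℝ) := fun p y => (∑ i, d p i * y i) ^ 3
  have hQW : ∀ p, Q p ∈ W := by
    intro p
    have hexp : Q p = ∑ i, ∑ j, ∑ l, (d p i * d p j * d p l) •
        (fun y : Fin t → ℝ => y i * y j * y l) := by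
      funext y
      simp only [Finset.sum_apply, Pi.smul_apply, smul_eq_mul, Q]
      rw [show (∑ i, d p i * y i) ^ 3
          = (∑ i, d p i * y i) * (∑ i, d p i * y i) * (∑ i, d p i * y i) by ring]
      rw [Finset.sum_mul_sum, Finset.sum_mul]
      apply Finset.sum_congr rfl
      intro i _
      rw [Finset.sum_mul]
      apply Finset.sum_congr rfl
      intro j _
      rw [Finset.mul_sum]
      apply Finset.sum_congr rfl
      intro l _
      ring
    rw [hexp]
    exact Submodule.sum_mem _ fun i _ => Submodule.sum_mem _ fun j _ =>
      Submodule.sum_mem _ fun l _ =>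
        Submodule.smul_mem _ _ (Submodule.subset_span (hmono3 i j l))
  have hQind : LinearIndependent ℝ Q := by
    rw [Fintype.linearIndependent_iff]
    intro g hg
    have hgy : ∀ y : Fin t → ℝ, ∑ p, g p * (∑ i, d p i * y i) ^ 3 = 0 := by
      intro y
      have := congrFun hg y
      simpa [Finset.sum_apply, Pi.smul_apply, smul_eq_mul, Q] using this
    let Yv : Fin n → (Fin t → ℝ) := fun q i => b i q
    have hkey1 : ∀ p q : Fin n, ∑ i, d p i * Yv q i = M q p := by
      intro p q
      rw [hcd p q]
    have hkey2 : ∀ p q r : Fin n, ∑ i, d p i * (Yv q + Yv r) i = M q p + M r p := by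
      intro p q r
      rw [hcd p q, hcd p r, ← Finset.sum_add_distrib]
      apply Finset.sum_congr rfl
      intro i _
      simp [Yv]
      ring
    have hkey3 : ∀ p q r s : Fin n,
        ∑ i, d p i * (Yv q + Yv r + Yv s) i = M q p + M r p + M s p := by
      intro p q r s
      rw [hcd p q, hcd p r, hcd p s, ← Finset.sum_add_distrib, ← Finset.sum_add_distrib]
      apply Finset.sum_congr rfl
      intro i _
      simp [Yv]
      ring
    have hrel : ∀ q r s, ∑ p, g p * (M q p * M r p * M s p) = 0 := by
      intro q r s
      have eqrs := hgy (Yv q + Yv r + Yv s)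
      simp only [hkey3] at eqrs
      have eqr := hgy (Yv q + Yv r)
      simp only [hkey2] at eqr
      have ers := hgy (Yv r + Yv s)
      simp only [hkey2] at ers
      have eqs := hgy (Yv q + Yv s)
      simp only [hkey2] at eqs
      have eq1 := hgy (Yv q)
      simp only [hkey1] at eq1
      have er1 := hgy (Yv r)
      simp only [hkey1] at er1
      have es1 := hgy (Yv s)
      simp only [hkey1] at es1
      have h6 : ∑ p, (6 : ℝ) * (g p * (M q p * M r p * M s p)) = 0 := by
        have hterm : ∀ p ∈ Finset.univ, (6 : ℝ) * (g p * (M q p * M r p * M s p))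
            = g p * (M q p + M r p + M s p) ^ 3
              - g p * (M q p + M r p) ^ 3 - g p * (M r p + M s p) ^ 3
              - g p * (M q p + M s p) ^ 3
              + g p * (M q p) ^ 3 + g p * (M r p) ^ 3 + g p * (M s p) ^ 3 := by
          intro p _
          ring
        rw [Finset.sum_congr rfl hterm]
        simp only [Finset.sum_add_distrib, Finset.sum_sub_distrib]
        rw [eqrs, eqr, ers, eqs, eq1, er1, es1]
        ring
      rw [← Finset.mul_sum] at h6
      rcases mul_eq_zero.mp h6 with h | h
      · norm_num at h
      · exact h
    have hoff : ∀ q p : Fin n, q ≠ p → M q p * M q p * M q p = M q p := by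
      intro q p h
      rw [hMoff q p h]
      exact cube_mem_aux (hentries q p)
    exact indep_aux M μ hMsymm hoff hMdiag hμ3 hμ0 g hrel
  -- counting
  have hWfin : FiniteDimensional ℝ W := FiniteDimensional.span_of_finite ℝ (Set.finite_range mono)
  let Q' : Fin n → W := fun p => ⟨Q p, hQW p⟩
  have hQ'ind : LinearIndependent ℝ Q' := by
    apply LinearIndependent.of_comp W.subtype
    exact hQind
  have h1 : n ≤ Module.finrank ℝ W := by
    simpa using hQ'ind.fintype_card_le_finrank
  have h2 : Module.finrank ℝ W ≤ Fintype.card (Sym (Fin t) 3) := finrank_range_le_card mono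
  have h3 : Fintype.card (Sym (Fin t) 3) = (t + 2).choose 3 := by
    rw [Sym.card_sym_eq_choose, Fintype.card_fin]
    congr 1
  omega
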